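/- arXiv:1811.04485 — 10 statements merged into one kernel-verified Lean document; each statement's English description precedes it below -/
import Mathlib

section
/- Let Σ be a simplicial complex, let Σ' ⊆ Σ be upward closed in Σ, and let (σ, τ) be a coreduction pair in Σ'. Then σ has no immediate face in Σ', i.e. bd_{Σ'}(σ) = ∅. (Core claim of Lemma 1: in a coreduction-based algorithm the smaller simplex of any feasible coreduction pair is free.) -/
open Finset

variable {α : Type*}

/-- `σ` is an immediate face of `τ`. -/
def ImmFace (σ τ : Finset α) : Prop :=
  σ ⊆ τ ∧ σ.card + 1 = τ.card

/-- A simplicial complex: a family of nonempty finsets closed under nonempty subsets. -/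
def IsComplex (S : Set (Finset α)) : Prop :=
  (∀ σ ∈ S, σ.Nonempty) ∧ ∀ τ ∈ S, ∀ σ : Finset α, σ ⊆ τ → σ.Nonempty → σ ∈ S

/-- Immediate boundary of `τ` in the family `S`. -/
def bd (S : Set (Finset α)) (τ : Finset α) : Set (Finset α) :=
  {σ ∈ S | ImmFace σ τ}

/-- Immediate coboundary of `σ` in the family `S`. -/
def cbd (S : Set (Finset α)) (σ : Finset α) : Set (Finset α) :=
  {τ ∈ S | ImmFace σ τ}

/-- `(σ, τ)` is a coreduction pair in `S`. -/
def CoredPair (S : Set (Finset α)) (σ τ : Finset α) : Prop :=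
  σ ∈ S ∧ τ ∈ S ∧ ImmFace σ τ ∧ bd S τ = {σ}

/-- `(σ, τ)` is a reduction pair in `S`. -/
def RedPair (S : Set (Finset α)) (σ τ : Finset α) : Prop :=
  σ ∈ S ∧ τ ∈ S ∧ ImmFace σ τ ∧ cbd S σ = {τ}

/-- `σ` is a free simplex in `S`. -/
def FreeSimplex (S : Set (Finset α)) (σ : Finset α) : Prop :=
  σ ∈ S ∧ bd S σ = ∅

/-- `σ` is a top simplex in `S`. -/
def TopSimplex (S : Set (Finset α)) (σ : Finset α) : Prop :=
  σ ∈ S ∧ cbd S σ = ∅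

/-- `S'` is an upward-closed subfamily of `S`. -/
def UpClosedIn (S S' : Set (Finset α)) : Prop :=
  S' ⊆ S ∧ ∀ σ ∈ S', ∀ τ ∈ S, σ ⊆ τ → τ ∈ S'

/-- An operation: removal of a pair of simplices, or of a single simplex. -/
abbrev Op (α : Type*) := (Finset α × Finset α) ⊕ Finset α

/-- Excise the simplices of an operation from a family. -/
def removeOp (S : Set (Finset α)) : Op α → Set (Finset α)
  | Sum.inl (σ, τ) => S \ {σ, τ}
  | Sum.inr σ => S \ {σ}

/-- Remaining family after performing a list of operations in order. -/
def remaining (S : Set (Finset α)) (L : List (Op α)) : Set (Finset α) :=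
  L.foldl removeOp S

/-- A coreduction-based removal sequence: every pair is a coreduction pair and
every single simplex is free, in the current remaining family. -/
def IsCoredSeq (S : Set (Finset α)) : List (Op α) → Prop
  | [] => True
  | o :: L =>
      (match o with
        | Sum.inl (σ, τ) => CoredPair S σ τ
        | Sum.inr σ => FreeSimplex S σ) ∧ IsCoredSeq (removeOp S o) L

/-- A reduction-based removal sequence: every pair is a reduction pair and
every single simplex is top, in the current remaining family. -/
def IsRedSeq (S : Set (Finset α)) : List (Op α) → Prop
  | [] => True
  | o :: L =>
      (match o with
        | Sum.inl (σ, τ) => RedPair S σ τ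
        | Sum.inr σ => TopSimplex S σ) ∧ IsRedSeq (removeOp S o) L

/-- A valid interleaved removal sequence: every pair is a coreduction or
reduction pair, and every single simplex is free or top, in the current
remaining family. -/
def IsInterSeq (S : Set (Finset α)) : List (Op α) → Prop
  | [] => True
  | o :: L =>
      (match o with
        | Sum.inl (σ, τ) => CoredPair S σ τ ∨ RedPair S σ τ
        | Sum.inr σ => FreeSimplex S σ ∨ TopSimplex S σ) ∧ IsInterSeq (removeOp S o) L

/-- A discrete vector field on `S`: pairs (face, immediate coface) of simplices of `S`,
each simplex of `S` belonging to at most one pair. -/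
def IsDVF (S : Set (Finset α)) (V : Set (Finset α × Finset α)) : Prop :=
  (∀ p ∈ V, p.1 ∈ S ∧ p.2 ∈ S ∧ ImmFace p.1 p.2) ∧
  ∀ σ ∈ S, ∀ p ∈ V, ∀ q ∈ V,
    (σ = p.1 ∨ σ = p.2) → (σ = q.1 ∨ σ = q.2) → p = q

/-- A `V`-path: a nonempty sequence of pairs of `V` such that each `σ_{i+1}` is an
immediate face of `τ_i` different from `σ_i`. -/
def IsVPath (V : Set (Finset α × Finset α)) (P : List (Finset α × Finset α)) : Prop :=
  P ≠ [] ∧ (∀ p ∈ P, p ∈ V) ∧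
  P.Chain' (fun p q => ImmFace q.1 p.2 ∧ q.1 ≠ p.1)

/-- A closed `V`-path: `σ_1` is an immediate face of `τ_r` different from `σ_r`. -/
def IsClosedVPath (V : Set (Finset α × Finset α))
    (P : List (Finset α × Finset α)) : Prop :=
  ∃ hne : P ≠ [], IsVPath V P ∧
    ImmFace (P.head hne).1 (P.getLast hne).2 ∧
    (P.head hne).1 ≠ (P.getLast hne).1

/-- The lower star of a vertex `v` with respect to a vertex function `F`. -/
def lowerStar (S : Set (Finset α)) (F : α → ℝ) (v : α) : Set (Finset α) :=
  {σ ∈ S | v ∈ σ ∧ ∀ w ∈ σ, F v ≤ F w}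

/-- Core claim of Lemma 1: if `S'` is upward closed in the simplicial complex `S`
and `(σ, τ)` is a coreduction pair in `S'`, then `σ` has empty immediate boundary
in `S'`. -/
theorem coreduction_smaller_is_free {α : Type*} [DecidableEq α]
    (S S' : Set (Finset α)) (hS : IsComplex S) (hup : UpClosedIn S S')
    (σ τ : Finset α) (h : CoredPair S' σ τ) :
    bd S' σ = ∅ := by
  obtain ⟨hσ', hτ', ⟨hστ, hcard⟩, hbd⟩ := h
  ext ρ
  simp only [Set.mem_empty_iff_false, iff_false]
  rintro ⟨hρ', hρσ, hρcard⟩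
  -- τ \ σ has exactly one element x
  have hx : ∃ x ∈ τ, x ∉ σ := by
    by_contra hc
    push_neg at hc
    have : τ ⊆ σ := hc
    have := Finset.card_le_card this
    omega
  obtain ⟨x, hxτ, hxσ⟩ := hx
  set ρ' : Finset α := insert x ρ with hρ'def
  have hxρ : x ∉ ρ := fun hh => hxσ (hρσ hh)
  have hρ'card : ρ'.card = ρ.card + 1 := Finset.card_insert_of_notMem hxρ
  have hρ'τ : ρ' ⊆ τ := by
    intro y hy
    rcases Finset.mem_insert.mp hy with rfl | hy
    · exact hxτ
    · exact hστ (hρσ hy)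
  have hρ'S : ρ' ∈ S := hS.2 τ (hup.1 hτ') ρ' hρ'τ ⟨x, Finset.mem_insert_self _ _⟩
  have hρ'S' : ρ' ∈ S' := hup.2 ρ hρ' ρ' hρ'S (Finset.subset_insert _ _)
  have : ρ' ∈ bd S' τ := ⟨hρ'S', hρ'τ, by omega⟩
  rw [hbd] at this
  have : x ∈ σ := by
    rw [show σ = ρ' from this.symm]
    exact Finset.mem_insert_self _ _
  exact hxσ this
end

section
/- Let Σ be a simplicial complex, let Σ' ⊆ Σ be upward closed in Σ, and let (σ, τ) be a coreduction pair in Σ'. Then excising the pair does not modify the immediate coboundary of any remaining simplex: for every ρ ∈ Σ' \ {σ, τ}, cbd_{Σ' \ {σ, τ}}(ρ) = cbd_{Σ'}(ρ). (Lemma 1: in a coreduction-based algorithm, each removal operation does not modify the coboundary of the remaining simplices.) -/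
open Finset

variable {α : Type*}

/-- Lemma 1: excising a coreduction pair from an upward-closed subfamily of a
simplicial complex does not modify the immediate coboundary of any remaining
simplex. -/
theorem coreduction_preserves_coboundary {α : Type*} [DecidableEq α]
    (S S' : Set (Finset α)) (hS : IsComplex S) (hup : UpClosedIn S S')
    (σ τ : Finset α) (h : CoredPair S' σ τ) :
    ∀ ρ ∈ S' \ {σ, τ}, cbd (S' \ {σ, τ}) ρ = cbd S' ρ := by
  rintro ρ ⟨hρ, hρn⟩
  simp only [Set.mem_insert_iff, Set.mem_singleton_iff, not_or] at hρn
  obtain ⟨hρσ, hρτ⟩ := hρn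
  obtain ⟨hσ, hτ, hst, hbd⟩ := h
  ext μ
  simp only [cbd, Set.mem_setOf_eq, Set.mem_diff, Set.mem_insert_iff,
    Set.mem_singleton_iff, not_or]
  constructor
  · rintro ⟨⟨hμ, _⟩, hf⟩; exact ⟨hμ, hf⟩
  · rintro ⟨hμ, hf⟩
    refine ⟨⟨hμ, ?_, ?_⟩, hf⟩
    · -- μ ≠ σ
      intro heq
      rw [heq] at hf
      -- ρ is an immediate face of σ; build ρ' = insert t ρ with t ∈ τ \ σ
      obtain ⟨t, htτ, htσ⟩ : ∃ t ∈ τ, t ∉ σ := by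
        by_contra hcon
        push_neg at hcon
        have h1 : τ ⊆ σ := hcon
        have := Finset.card_le_card h1
        have := hst.2
        omega
      have htρ : t ∉ ρ := fun h => htσ (hf.1 h)
      have hsubτ : insert t ρ ⊆ τ := by
        intro x hx
        rcases Finset.mem_insert.mp hx with rfl | hx
        · exact htτ
        · exact hst.1 (hf.1 hx)
      have hρ'S : insert t ρ ∈ S := (hS.2 τ (hup.1 hτ)) _ hsubτ ⟨t, Finset.mem_insert_self _ _⟩
      have hρ'S' : insert t ρ ∈ S' := hup.2 ρ hρ _ hρ'S (Finset.subset_insert _ _)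
      have hcard : (insert t ρ).card = ρ.card + 1 := Finset.card_insert_of_notMem htρ
      have : insert t ρ ∈ bd S' τ := ⟨hρ'S', hsubτ, by
        have := hf.2; have := hst.2; omega⟩
      rw [hbd] at this
      exact htσ (this ▸ Finset.mem_insert_self t ρ)
    · -- μ ≠ τ
      intro heq
      rw [heq] at hf
      have : ρ ∈ bd S' τ := ⟨hρ, hf⟩
      rw [hbd] at this
      exact hρσ this
end

section
/- Let Σ be a simplicial complex, let Σ' ⊆ Σ be upward closed in Σ, and let (σ, τ) be a coreduction pair in Σ'. Then Σ' \ {σ, τ} is again upward closed in Σ. (Excising a coreduction pair preserves the S-complex invariant maintained by a coreduction-based algorithm.) -/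
open Finset

variable {α : Type*}

/-- Excising a coreduction pair preserves upward closedness in the ambient
simplicial complex. -/
theorem coreduction_preserves_upClosed {α : Type*} [DecidableEq α]
    (S S' : Set (Finset α)) (hS : IsComplex S) (hup : UpClosedIn S S')
    (σ τ : Finset α) (h : CoredPair S' σ τ) :
    UpClosedIn S (S' \ {σ, τ}) := by
  obtain ⟨hσS', hτS', ⟨hστ, hcard⟩, hbd⟩ := h
  obtain ⟨hsub, hclose⟩ := hup
  -- key: for any ρ ∈ S' with ρ ⊆ τ, ρ ≠ τ, and x ∈ τ \ ρ, we have τ.erase x = σ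
  have key : ∀ ρ ∈ S', ρ ⊆ τ → ∀ x ∈ τ, x ∉ ρ → τ.erase x = σ := by
    intro ρ hρ hρτ x hxτ hxρ
    have hρne : ρ.Nonempty := hS.1 ρ (hsub hρ)
    have hρe : ρ ⊆ τ.erase x := by
      intro y hy; exact Finset.mem_erase.2 ⟨fun h => hxρ (h ▸ hy), hρτ hy⟩
    have heS : τ.erase x ∈ S :=
      hS.2 τ (hsub hτS') _ (Finset.erase_subset _ _) (hρne.mono hρe)
    have heS' : τ.erase x ∈ S' := hclose ρ hρ _ heS hρe
    have hmem : τ.erase x ∈ bd S' τ := by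
      refine ⟨heS', Finset.erase_subset _ _, ?_⟩
      rw [Finset.card_erase_of_mem hxτ]
      omega
    rw [hbd] at hmem
    exact hmem
  constructor
  · exact fun ρ hρ => hsub hρ.1
  · rintro ρ ⟨hρS', hρns⟩ μ hμS hρμ
    simp only [Set.mem_insert_iff, Set.mem_singleton_iff, not_or] at hρns
    obtain ⟨hρσ, hρτ⟩ := hρns
    have hμS' : μ ∈ S' := hclose ρ hρS' μ hμS hρμ
    refine ⟨hμS', ?_⟩
    simp only [Set.mem_insert_iff, Set.mem_singleton_iff, not_or]
    constructor
    · rintro rfl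
      -- ρ ⊊ σ ⊆ τ; pick x ∈ σ \ ρ
      obtain ⟨x, hxσ, hxρ⟩ := Finset.exists_of_ssubset (hρμ.ssubset_of_ne hρσ)
      have h2 := key ρ hρS' (hρμ.trans hστ) x (hστ hxσ) hxρ
      rw [← h2] at hxσ
      exact (Finset.mem_erase.1 hxσ).1 rfl
    · rintro rfl
      obtain ⟨x, hxτ, hxρ⟩ := Finset.exists_of_ssubset (hρμ.ssubset_of_ne hρτ)
      have hx := key ρ hρS' hρμ x hxτ hxρ
      by_cases h1 : ∃ y ∈ μ, y ∉ ρ ∧ y ≠ x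
      · obtain ⟨y, hyτ, hyρ, hyx⟩ := h1
        have hy := key ρ hρS' hρμ y hyτ hyρ
        have : x ∈ μ.erase y := Finset.mem_erase.2 ⟨fun h => hyx h.symm, hxτ⟩
        rw [hy, ← hx] at this
        exact (Finset.mem_erase.1 this).1 rfl
      · push_neg at h1
        -- then ρ = τ.erase x = σ, contradiction
        apply hρσ
        rw [← hx]
        apply Finset.Subset.antisymm
        · intro y hy; exact Finset.mem_erase.2 ⟨fun h => hxρ (h ▸ hy), hρμ hy⟩
        · intro y hy
          obtain ⟨hyx, hyτ⟩ := Finset.mem_erase.1 hy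
          by_contra hyρ
          exact hyx (h1 y hyτ hyρ)
end

section
/- Let Σ be a simplicial complex, let Σ' ⊆ Σ be upward closed in Σ, and let σ ∈ Σ' be free in Σ' (i.e. bd_{Σ'}(σ) = ∅). Then Σ' \ {σ} is again upward closed in Σ. (Excising a free simplex preserves the S-complex invariant maintained by a coreduction-based algorithm.) -/
open Finset

variable {α : Type*}

/-- Excising a free simplex preserves upward closedness in the ambient simplicial
complex. -/
theorem free_removal_preserves_upClosed {α : Type*} [DecidableEq α]
    (S S' : Set (Finset α)) (hS : IsComplex S) (hup : UpClosedIn S S')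
    (σ : Finset α) (h : FreeSimplex S' σ) :
    UpClosedIn S (S' \ {σ}) := by
  obtain ⟨hsub, hupc⟩ := hup
  obtain ⟨hσ, hbd⟩ := h
  refine ⟨fun x hx => hsub hx.1, fun ρ hρ τ hτ hst => ?_⟩
  obtain ⟨hρS', hρne⟩ := hρ
  refine ⟨hupc ρ hρS' τ hτ hst, fun hτσ => ?_⟩
  have hτσ : τ = σ := hτσ
  subst hτσ
  have hρneσ : ρ ≠ τ := hρne
  have hssub : ρ ⊂ τ := lt_of_le_of_ne hst hρneσ
  -- pick an element of τ \ ρ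
  obtain ⟨a, haτ, haρ⟩ := Finset.exists_of_ssubset hssub
  set μ := τ.erase a with hμ
  have hρμ : ρ ⊆ μ := fun x hx => Finset.mem_erase.2 ⟨fun h' => haρ (h' ▸ hx), hst hx⟩
  have hμτ : μ ⊆ τ := Finset.erase_subset a τ
  have hρnonempty : ρ.Nonempty := hS.1 ρ (hsub hρS')
  have hμnonempty : μ.Nonempty := hρnonempty.mono hρμ
  have hμS : μ ∈ S := hS.2 τ (hsub hσ) μ hμτ hμnonempty
  have hμS' : μ ∈ S' := hupc ρ hρS' μ hμS hρμ
  have hcard : μ.card + 1 = τ.card := by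
    rw [hμ, Finset.card_erase_of_mem haτ]
    have : 1 ≤ τ.card := Finset.card_pos.2 ⟨a, haτ⟩
    omega
  have : μ ∈ bd S' τ := ⟨hμS', hμτ, hcard⟩
  rw [hbd] at this
  exact this
end

section
/- Let Σ' be a simplicial complex (a downward closed family of nonempty finsets) and let (σ, τ) be a reduction pair in Σ'. Then τ has no immediate coface in Σ', i.e. cbd_{Σ'}(τ) = ∅. (Core claim of Lemma 2: in a reduction-based algorithm the larger simplex of any feasible reduction pair is a top simplex.) -/
open Finset

variable {α : Type*}

/-- Core claim of Lemma 2: if `(σ, τ)` is a reduction pair in a simplicial complex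
`S'`, then `τ` has empty immediate coboundary in `S'`. -/
theorem reduction_larger_is_top {α : Type*} [DecidableEq α]
    (S' : Set (Finset α)) (hS' : IsComplex S')
    (σ τ : Finset α) (h : RedPair S' σ τ) :
    cbd S' τ = ∅ := by
  obtain ⟨hσ, hτ, ⟨hsub, hcard⟩, hcbd⟩ := h
  ext ρ
  simp only [Set.mem_empty_iff_false, iff_false]
  rintro ⟨hρ, hτρ, hcard2⟩
  -- pick x ∈ ρ \ τ
  have hex : (ρ \ τ).Nonempty := by
    rw [Finset.sdiff_nonempty]
    intro hle
    have := Finset.eq_of_subset_of_card_le hle (by omega)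
    subst this
    omega
  obtain ⟨x, hx⟩ := hex
  have hxρ : x ∈ ρ := (Finset.mem_sdiff.mp hx).1
  have hxτ : x ∉ τ := (Finset.mem_sdiff.mp hx).2
  have hxσ : x ∉ σ := fun hc => hxτ (hsub hc)
  set υ := insert x σ with hυ
  have hυρ : υ ⊆ ρ := Finset.insert_subset hxρ (hsub.trans hτρ)
  have hυS : υ ∈ S' := hS'.2 ρ hρ υ hυρ ⟨x, Finset.mem_insert_self _ _⟩
  have hυcbd : υ ∈ cbd S' σ := by
    refine ⟨hυS, Finset.subset_insert _ _, ?_⟩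
    rw [Finset.card_insert_of_notMem hxσ]
  rw [hcbd] at hυcbd
  exact hxτ (hυcbd ▸ Finset.mem_insert_self x σ)
end

section
/- Let Σ' be a simplicial complex (a downward closed family of nonempty finsets) and let (σ, τ) be a reduction pair in Σ'. Then excising the pair does not modify the immediate boundary of any remaining simplex: for every ρ ∈ Σ' \ {σ, τ}, bd_{Σ' \ {σ, τ}}(ρ) = bd_{Σ'}(ρ). (Lemma 2: in a reduction-based algorithm, each removal operation does not modify the boundary of the remaining simplices.) -/
open Finset

variable {α : Type*}

/-- Lemma 2: excising a reduction pair from a simplicial complex does not modify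
the immediate boundary of any remaining simplex. -/
theorem reduction_preserves_boundary {α : Type*} [DecidableEq α]
    (S' : Set (Finset α)) (hS' : IsComplex S')
    (σ τ : Finset α) (h : RedPair S' σ τ) :
    ∀ ρ ∈ S' \ {σ, τ}, bd (S' \ {σ, τ}) ρ = bd S' ρ := by
  obtain ⟨hσ, hτ, hστ, hcbd⟩ := h
  rintro ρ ⟨hρS, hρne⟩
  ext π
  simp only [bd, Set.mem_setOf_eq, Set.mem_diff, Set.mem_insert_iff,
    Set.mem_singleton_iff] at *
  constructor
  · rintro ⟨⟨hπS, -⟩, hface⟩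
    exact ⟨hπS, hface⟩
  · rintro ⟨hπS, hface⟩
    refine ⟨⟨hπS, ?_⟩, hface⟩
    push_neg
    constructor
    · rintro rfl
      have : ρ ∈ cbd S' π := ⟨hρS, hface⟩
      rw [hcbd] at this
      exact hρne (Or.inr this)
    · rintro rfl
      -- π = τ is an immediate face of ρ; find another coface of σ inside ρ
      have hσρ : σ ⊆ ρ := hστ.1.trans hface.1
      obtain ⟨x, hxρ, hxπ⟩ : ∃ x ∈ ρ, x ∉ π := by
        by_contra hc
        push_neg at hc
        have : ρ ⊆ π := hc
        have h1 := Finset.card_le_card this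
        have h2 := hface.2
        omega
      have hxσ : x ∉ σ := fun hx => hxπ (hστ.1 hx)
      set μ := insert x σ with hμ
      have hμρ : μ ⊆ ρ := Finset.insert_subset hxρ (hστ.1.trans hface.1)
      have hμS : μ ∈ S' := hS'.2 ρ hρS μ hμρ ⟨x, Finset.mem_insert_self x σ⟩
      have hμcbd : μ ∈ cbd S' σ :=
        ⟨hμS, Finset.subset_insert x σ, by rw [Finset.card_insert_of_notMem hxσ]⟩
      rw [hcbd] at hμcbd
      exact hxπ (hμcbd ▸ Finset.mem_insert_self x σ)
end

section
/- Let Σ' be a simplicial complex (a downward closed family of nonempty finsets) and let (σ, τ) be a reduction pair in Σ'. Then Σ' \ {σ, τ} is again a simplicial complex, i.e. it is still closed under taking nonempty subsets of its members. (Excising a reduction pair preserves the simplicial complex invariant maintained by a reduction-based algorithm.) -/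
open Finset

variable {α : Type*}

private lemma red_no_strict_coface {α : Type*} [DecidableEq α]
    (S' : Set (Finset α)) (hS' : IsComplex S')
    (σ τ : Finset α) (h : RedPair S' σ τ)
    (τ' : Finset α) (hτ'S : τ' ∈ S') (hsub : σ ⊆ τ') (hne : τ' ≠ σ) :
    τ ⊆ τ' := by
  obtain ⟨hσS, hτS, ⟨hστ, hcard⟩, hcbd⟩ := h
  -- pick a ∈ τ' \ σ
  have hss : σ ⊂ τ' := Finset.ssubset_iff_subset_ne.mpr ⟨hsub, fun e => hne e.symm⟩
  obtain ⟨a, haτ', haσ⟩ := Finset.exists_of_ssubset hss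
  have hwS : insert a σ ∈ S' := by
    apply hS'.2 τ' hτ'S
    · exact Finset.insert_subset haτ' hsub
    · exact Finset.insert_nonempty a σ
  have hw : insert a σ ∈ cbd S' σ :=
    ⟨hwS, Finset.subset_insert _ _, by rw [Finset.card_insert_of_notMem haσ]⟩
  rw [hcbd] at hw
  have hwτ : insert a σ = τ := hw
  rw [← hwτ]
  exact Finset.insert_subset haτ' hsub

private lemma red_coface_eq {α : Type*} [DecidableEq α]
    (S' : Set (Finset α)) (hS' : IsComplex S')
    (σ τ : Finset α) (h : RedPair S' σ τ)
    (τ' : Finset α) (hτ'S : τ' ∈ S') (hsub : τ ⊆ τ') : τ' = τ := by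
  by_contra hne
  have hss : τ ⊂ τ' := Finset.ssubset_iff_subset_ne.mpr ⟨hsub, fun e => hne e.symm⟩
  obtain ⟨a, haτ', haτ⟩ := Finset.exists_of_ssubset hss
  have haσ : a ∉ σ := fun ha => haτ (h.2.2.1.1 ha)
  have hwS : insert a σ ∈ S' := by
    apply hS'.2 τ' hτ'S
    · exact Finset.insert_subset haτ' (h.2.2.1.1.trans hsub)
    · exact Finset.insert_nonempty a σ
  have hw : insert a σ ∈ cbd S' σ :=
    ⟨hwS, Finset.subset_insert _ _, by rw [Finset.card_insert_of_notMem haσ]⟩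
  rw [h.2.2.2] at hw
  exact haτ (hw ▸ Finset.mem_insert_self a σ)

/-- Excising a reduction pair from a simplicial complex yields again a simplicial
complex (closed under taking nonempty subsets of its members). -/
theorem reduction_preserves_complex {α : Type*} [DecidableEq α]
    (S' : Set (Finset α)) (hS' : IsComplex S')
    (σ τ : Finset α) (h : RedPair S' σ τ) :
    IsComplex (S' \ {σ, τ}) := by
  constructor
  · exact fun ρ hρ => hS'.1 ρ hρ.1
  · rintro τ' ⟨hτ'S, hτ'ne⟩ ρ hsub hρne
    have hτ'σ : τ' ≠ σ := fun e => hτ'ne (Or.inl e)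
    have hτ'τ : τ' ≠ τ := fun e => hτ'ne (Or.inr e)
    have hρS : ρ ∈ S' := hS'.2 τ' hτ'S ρ hsub hρne
    refine ⟨hρS, ?_⟩
    rintro (rfl | rfl)
    · -- ρ = σ
      have hττ' := red_no_strict_coface S' hS' ρ τ h τ' hτ'S hsub hτ'σ
      exact hτ'τ (red_coface_eq S' hS' ρ τ h τ' hτ'S hττ')
    · -- ρ = τ
      exact hτ'τ (red_coface_eq S' hS' σ ρ h τ' hτ'S hsub)
end

section
/- Let Σ be a finite simplicial complex and let L be an exhausting reduction-based removal sequence on Σ. Then the reversed list of L is an exhausting coreduction-based removal sequence on Σ: starting again from remaining family Σ, each pair occurring in the reversed list is a coreduction pair in the current remaining family, and each single simplex occurring in the reversed list is free in the current remaining family. In particular, the same set of pairs (hence the same Forman gradient) and the same set of single (critical) simplices are produced. (Proposition 1, forward direction.) -/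
open Finset

variable {α : Type*}

lemma immFace_irrefl (σ : Finset α) : ¬ ImmFace σ σ := by
  rintro ⟨_, h⟩; omega

/-- If `cbd S σ` is a subsingleton, the only supersets of `σ` in `S` are `σ` and
its immediate cofaces. -/
lemma upstar [DecidableEq α] {S : Set (Finset α)} (hS : IsComplex S) {σ : Finset α} (hσ : σ ∈ S)
    (hsub : (cbd S σ).Subsingleton) {ρ : Finset α} (hρ : ρ ∈ S) (h : σ ⊆ ρ) :
    ρ = σ ∨ ρ ∈ cbd S σ := by
  rcases eq_or_lt_of_le (Finset.card_le_card h) with hc | hc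
  · left; exact (Finset.eq_of_subset_of_card_le h hc.ge).symm
  rcases Nat.lt_or_ge ρ.card (σ.card + 2) with hc2 | hc2
  · right; exact ⟨hρ, h, by omega⟩
  · exfalso
    have hcard : 2 ≤ (ρ \ σ).card := by
      rw [Finset.card_sdiff_of_subset h]; omega
    obtain ⟨x, hx, y, hy, hxy⟩ := Finset.one_lt_card.mp hcard
    have hxρ := (Finset.mem_sdiff.mp hx).1
    have hxσ := (Finset.mem_sdiff.mp hx).2
    have hyρ := (Finset.mem_sdiff.mp hy).1
    have hyσ := (Finset.mem_sdiff.mp hy).2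
    have hne : σ.Nonempty := hS.1 σ hσ
    have h1 : insert x σ ∈ cbd S σ := by
      refine ⟨hS.2 ρ hρ _ (Finset.insert_subset hxρ h) (Finset.insert_nonempty _ _),
        Finset.subset_insert _ _, ?_⟩
      rw [Finset.card_insert_of_notMem hxσ]
    have h2 : insert y σ ∈ cbd S σ := by
      refine ⟨hS.2 ρ hρ _ (Finset.insert_subset hyρ h) (Finset.insert_nonempty _ _),
        Finset.subset_insert _ _, ?_⟩
      rw [Finset.card_insert_of_notMem hyσ]
    have := hsub h1 h2
    have hxmem : x ∈ insert y σ := this ▸ Finset.mem_insert_self x σ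
    rcases Finset.mem_insert.mp hxmem with h' | h'
    · exact hxy h'
    · exact hxσ h'

lemma isComplex_sdiff {S A : Set (Finset α)} (hS : IsComplex S) (hA : UpClosedIn S A) :
    IsComplex (S \ A) := by
  constructor
  · intro σ hσ; exact hS.1 σ hσ.1
  · rintro τ ⟨hτS, hτA⟩ σ hsub hne
    exact ⟨hS.2 τ hτS σ hsub hne, fun hσA => hτA (hA.2 σ hσA τ hτS hsub)⟩

lemma bd_sdiff {S A : Set (Finset α)} (hA : UpClosedIn S A) {μ : Finset α}
    (hμ : μ ∈ S \ A) : bd S μ = bd (S \ A) μ := by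
  ext ρ
  constructor
  · rintro ⟨hρ, hf⟩
    exact ⟨⟨hρ, fun hρA => hμ.2 (hA.2 ρ hρA μ hμ.1 hf.1)⟩, hf⟩
  · rintro ⟨hρ, hf⟩; exact ⟨hρ.1, hf⟩

lemma upClosedIn_diff {S A : Set (Finset α)} (hA : UpClosedIn S A)
    {B : Set (Finset α)} (hB : ∀ b ∈ B, b ∉ A) : UpClosedIn (S \ B) A := by
  refine ⟨fun a ha => ⟨hA.1 ha, fun hB' => hB a hB' ha⟩, ?_⟩
  intro σ hσ τ hτ hsub
  exact hA.2 σ hσ τ hτ.1 hsub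

lemma lift_cored : ∀ (M : List (Op α)) (S A : Set (Finset α)), UpClosedIn S A →
    IsCoredSeq (S \ A) M → IsCoredSeq S M ∧ remaining S M = remaining (S \ A) M ∪ A := by
  intro M
  induction M with
  | nil =>
    intro S A hA _
    exact ⟨trivial, (Set.diff_union_of_subset hA.1).symm⟩
  | cons o M ih =>
    intro S A hA h
    obtain ⟨ho, hM⟩ := h
    rcases o with ⟨σ, τ⟩ | σ
    · obtain ⟨hσ, hτ, himm, hbd⟩ := ho
      have hB : ∀ b ∈ ({σ, τ} : Set (Finset α)), b ∉ A := by
        rintro b (rfl | rfl)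
        · exact hσ.2
        · exact hτ.2
      have hkey : removeOp (S \ A) (Sum.inl (σ, τ)) = removeOp S (Sum.inl (σ, τ)) \ A := by
        show (S \ A) \ {σ, τ} = (S \ {σ, τ}) \ A
        rw [Set.diff_diff_comm]
      have hA' : UpClosedIn (removeOp S (Sum.inl (σ, τ))) A := upClosedIn_diff hA hB
      rw [hkey] at hM
      obtain ⟨h1, h2⟩ := ih _ A hA' hM
      refine ⟨⟨⟨hσ.1, hτ.1, himm, ?_⟩, h1⟩, ?_⟩
      · rw [bd_sdiff hA hτ, hbd]
      · show remaining (removeOp S _) M = remaining (removeOp (S \ A) _) M ∪ A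
        rw [hkey]; exact h2
    · obtain ⟨hσ, hbd⟩ := ho
      have hB : ∀ b ∈ ({σ} : Set (Finset α)), b ∉ A := by
        rintro b rfl; exact hσ.2
      have hkey : removeOp (S \ A) (Sum.inr σ) = removeOp S (Sum.inr σ) \ A := by
        show (S \ A) \ {σ} = (S \ {σ}) \ A
        rw [Set.diff_diff_comm]
      have hA' : UpClosedIn (removeOp S (Sum.inr σ)) A := upClosedIn_diff hA hB
      rw [hkey] at hM
      obtain ⟨h1, h2⟩ := ih _ A hA' hM
      refine ⟨⟨⟨hσ.1, ?_⟩, h1⟩, ?_⟩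
      · rw [bd_sdiff hA hσ, hbd]
      · show remaining (removeOp S _) M = remaining (removeOp (S \ A) _) M ∪ A
        rw [hkey]; exact h2

lemma isCoredSeq_append : ∀ (M : List (Op α)) (S : Set (Finset α)) (M₂ : List (Op α)),
    IsCoredSeq S M → IsCoredSeq (remaining S M) M₂ → IsCoredSeq S (M ++ M₂) := by
  intro M
  induction M with
  | nil => intro S M₂ _ h; exact h
  | cons o M ih =>
    intro S M₂ h1 h2
    exact ⟨h1.1, ih _ _ h1.2 h2⟩

lemma remaining_append (S : Set (Finset α)) (M M₂ : List (Op α)) :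
    remaining S (M ++ M₂) = remaining (remaining S M) M₂ :=
  List.foldl_append ..

lemma main_aux [DecidableEq α] :
    ∀ (L : List (Op α)) (S : Set (Finset α)), IsComplex S →
    IsRedSeq S L → remaining S L = ∅ →
    IsCoredSeq S L.reverse ∧ remaining S L.reverse = ∅ := by
  intro L
  induction L with
  | nil => intro S _ _ hex; exact ⟨trivial, hex⟩
  | cons o L ih =>
    intro S hS hL hex
    obtain ⟨ho, hL'⟩ := hL
    rcases o with ⟨σ, τ⟩ | σ
    · obtain ⟨hσ, hτ, himm, hcbd⟩ := ho
      have hsub : (cbd S σ).Subsingleton := by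
        rw [hcbd]; exact Set.subsingleton_singleton
      have hup : UpClosedIn S ({σ, τ} : Set (Finset α)) := by
        refine ⟨?_, ?_⟩
        · rintro a (rfl | rfl); exacts [hσ, hτ]
        · rintro a (rfl | rfl) μ hμ hsubμ
          · rcases upstar hS hσ hsub hμ hsubμ with h | h
            · exact Or.inl h
            · right; rw [hcbd] at h; exact h
          · rcases upstar hS hσ hsub hμ (himm.1.trans hsubμ) with h | h
            · exact Or.inl h
            · right; rw [hcbd] at h; exact h
      have hS' : IsComplex (S \ {σ, τ}) := isComplex_sdiff hS hup
      obtain ⟨hc, hr⟩ := ih (S \ {σ, τ}) hS' hL' hex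
      obtain ⟨hc2, hrem⟩ := lift_cored L.reverse S {σ, τ} hup hc
      rw [hr, Set.empty_union] at hrem
      have hlast : IsCoredSeq (remaining S L.reverse) [Sum.inl (σ, τ)] := by
        rw [hrem]
        refine ⟨⟨Or.inl rfl, Or.inr rfl, himm, ?_⟩, trivial⟩
        ext ρ
        simp only [bd, Set.mem_setOf_eq, Set.mem_singleton_iff, Set.mem_insert_iff]
        constructor
        · rintro ⟨rfl | rfl, hf⟩
          · rfl
          · exact absurd hf (immFace_irrefl _)
        · rintro rfl; exact ⟨Or.inl rfl, himm⟩
      constructor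
      · rw [List.reverse_cons]
        exact isCoredSeq_append _ _ _ hc2 hlast
      · rw [List.reverse_cons, remaining_append, hrem]
        show ({σ, τ} : Set (Finset α)) \ {σ, τ} = ∅
        simp
    · obtain ⟨hσ, hcbd⟩ := ho
      have hsub : (cbd S σ).Subsingleton := by
        rw [hcbd]; exact Set.subsingleton_empty
      have hup : UpClosedIn S ({σ} : Set (Finset α)) := by
        refine ⟨by rintro a rfl; exact hσ, ?_⟩
        rintro a rfl μ hμ hsubμ
        rcases upstar hS hσ hsub hμ hsubμ with h | h
        · exact h
        · rw [hcbd] at h; exact absurd h (Set.notMem_empty _)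
      have hS' : IsComplex (S \ {σ}) := isComplex_sdiff hS hup
      obtain ⟨hc, hr⟩ := ih (S \ {σ}) hS' hL' hex
      obtain ⟨hc2, hrem⟩ := lift_cored L.reverse S {σ} hup hc
      rw [hr, Set.empty_union] at hrem
      have hlast : IsCoredSeq (remaining S L.reverse) [Sum.inr σ] := by
        rw [hrem]
        refine ⟨⟨rfl, ?_⟩, trivial⟩
        ext ρ
        simp only [bd, Set.mem_setOf_eq, Set.mem_singleton_iff,
          Set.mem_empty_iff_false, iff_false, not_and]
        rintro rfl hf
        exact immFace_irrefl _ hf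
      constructor
      · rw [List.reverse_cons]
        exact isCoredSeq_append _ _ _ hc2 hlast
      · rw [List.reverse_cons, remaining_append, hrem]
        show ({σ} : Set (Finset α)) \ {σ} = ∅
        simp

/-- Proposition 1, forward direction: the reverse of an exhausting reduction-based
removal sequence on a finite simplicial complex is an exhausting coreduction-based
removal sequence, producing the same set of pairs and of single (critical)
simplices. -/
theorem reduction_seq_reverse_is_coreduction_seq {α : Type*} [DecidableEq α]
    (S : Set (Finset α)) (hS : IsComplex S) (hfin : S.Finite)
    (L : List (Op α)) (hL : IsRedSeq S L) (hex : remaining S L = ∅) :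
    IsCoredSeq S L.reverse ∧ remaining S L.reverse = ∅ ∧
    (∀ p : Finset α × Finset α, Sum.inl p ∈ L.reverse ↔ Sum.inl p ∈ L) ∧
    (∀ σ : Finset α, Sum.inr σ ∈ L.reverse ↔ Sum.inr σ ∈ L) := by
  obtain ⟨h1, h2⟩ := main_aux L S hS hL hex
  exact ⟨h1, h2, fun p => List.mem_reverse, fun σ => List.mem_reverse⟩
end

section
/- Let Σ be a finite simplicial complex and let L be a valid interleaved removal sequence on Σ. Suppose the operation at step i removes a coreduction pair or a free simplex, and let Σ'_{i−1} and Σ'_i be the remaining families before and after step i. If (α, β) is a reduction pair in Σ'_i, then (α, β) was already a reduction pair in Σ'_{i−1}. (Remark 2, first part: in an interleaved-based algorithm, a coreduction pair or free simplex removal cannot make a reduction pair feasible.) -/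
open Finset

variable {α : Type*}

/-- Auxiliary invariant: every simplex of `S₀` removed so far either has no
immediate face remaining, or no immediate coface remaining. -/
def RemInv (S₀ S' : Set (Finset α)) : Prop :=
  S' ⊆ S₀ ∧ ∀ γ ∈ S₀, γ ∉ S' →
    (∀ ρ ∈ S₀, ImmFace ρ γ → ρ ∉ S') ∨ (∀ τ ∈ S₀, ImmFace γ τ → τ ∉ S')

lemma remInv_self (S₀ : Set (Finset α)) : RemInv S₀ S₀ :=
  ⟨subset_rfl, fun γ hγ hγ' => absurd hγ hγ'⟩

/-- If `(σ, τ)` is a coreduction pair in `S'`, then `σ` has no immediate face in `S'`. -/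
lemma cored_bottom_no_face {S₀ S' : Set (Finset α)} (hS : IsComplex S₀)
    (hinv : RemInv S₀ S') {σ τ a : Finset α} (hc : CoredPair S' σ τ)
    (ha : a ∈ S') (haf : ImmFace a σ) : False := by
  classical
  obtain ⟨hσ, hτ, ⟨hsub, hcard⟩, hbd⟩ := hc
  obtain ⟨x, hxτ, hxσ⟩ := Finset.exists_of_ssubset
    (Finset.ssubset_iff_subset_ne.mpr ⟨hsub, fun h => by rw [h] at hcard; omega⟩)
  have hxa : x ∉ a := fun h => hxσ (haf.1 h)
  set γ : Finset α := insert x a with hγdef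
  have hγcard : γ.card = a.card + 1 := Finset.card_insert_of_notMem hxa
  have hγτ : γ ⊆ τ := Finset.insert_subset hxτ (haf.1.trans hsub)
  have hγS₀ : γ ∈ S₀ := hS.2 τ (hinv.1 hτ) γ hγτ ⟨x, Finset.mem_insert_self x a⟩
  have hfγτ : ImmFace γ τ := ⟨hγτ, by rw [hγcard, haf.2]; exact hcard⟩
  have hfaγ : ImmFace a γ := ⟨Finset.subset_insert x a, hγcard.symm⟩
  have hγS' : γ ∉ S' := by
    intro h
    have hmem : γ ∈ bd S' τ := ⟨h, hfγτ⟩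
    rw [hbd] at hmem
    exact hxσ (hmem ▸ Finset.mem_insert_self x a)
  rcases hinv.2 γ hγS₀ hγS' with h | h
  · exact (h a (hinv.1 ha) hfaγ) ha
  · exact (h τ (hinv.1 hτ) hfγτ) hτ

/-- If `(α', β)` is a reduction pair in `S'`, then `β` has no immediate coface in `S'`. -/
lemma red_top_no_coface {S₀ S' : Set (Finset α)} (hS : IsComplex S₀)
    (hinv : RemInv S₀ S') {α' β t : Finset α} (hc : RedPair S' α' β)
    (ht : t ∈ S') (hft : ImmFace β t) : False := by
  classical
  obtain ⟨hα, hβ, ⟨hsub, hcard⟩, hcbd⟩ := hc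
  obtain ⟨y, hyβ, hyα⟩ := Finset.exists_of_ssubset
    (Finset.ssubset_iff_subset_ne.mpr ⟨hsub, fun h => by rw [h] at hcard; omega⟩)
  have hyt : y ∈ t := hft.1 hyβ
  set γ : Finset α := t.erase y with hγdef
  have hγcard : γ.card = t.card - 1 := Finset.card_erase_of_mem hyt
  have hγcard' : γ.card = α'.card + 1 := by
    have h2 := hft.2; omega
  have hαγ : α' ⊆ γ := Finset.subset_erase.mpr ⟨hsub.trans hft.1, hyα⟩
  have hγt : γ ⊆ t := Finset.erase_subset y t
  have hγS₀ : γ ∈ S₀ := hS.2 t (hinv.1 ht) γ hγt (Finset.card_pos.mp (by omega))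
  have hfαγ : ImmFace α' γ := ⟨hαγ, hγcard'.symm⟩
  have hfγt : ImmFace γ t := ⟨hγt, by have h2 := hft.2; omega⟩
  have hγS' : γ ∉ S' := by
    intro h
    have hmem : γ ∈ cbd S' α' := ⟨h, hfαγ⟩
    rw [hcbd] at hmem
    exact Finset.notMem_erase y t (by rw [show t.erase y = β from hmem]; exact hyβ)
  rcases hinv.2 γ hγS₀ hγS' with h | h
  · exact (h α' (hinv.1 hα) hfαγ) hα
  · exact (h t (hinv.1 ht) hfγt) ht

lemma remInv_step {S₀ S' : Set (Finset α)} (hS : IsComplex S₀) (hinv : RemInv S₀ S')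
    (o : Op α)
    (hvalid : match o with
      | Sum.inl (σ, τ) => CoredPair S' σ τ ∨ RedPair S' σ τ
      | Sum.inr σ => FreeSimplex S' σ ∨ TopSimplex S' σ) :
    RemInv S₀ (removeOp S' o) := by
  have hsub : removeOp S' o ⊆ S' := by
    cases o with
    | inl p => exact fun x hx => hx.1
    | inr s => exact fun x hx => hx.1
  refine ⟨hsub.trans hinv.1, ?_⟩
  intro γ hγ₀ hγ
  by_cases hγS' : γ ∈ S'
  · -- newly removed
    cases o with
    | inl p =>
      obtain ⟨σ, τ⟩ := p
      have hγmem : γ = σ ∨ γ = τ := by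
        by_contra hne
        push_neg at hne
        exact hγ ⟨hγS', by simp [hne.1, hne.2]⟩
      rcases hvalid with hcp | hrp
      · -- coreduction pair: left disjunct
        left
        intro ρ hρ₀ hρface hρmem
        have hρS' : ρ ∈ S' := hsub hρmem
        rcases hγmem with rfl | rfl
        · exact cored_bottom_no_face hS hinv hcp hρS' hρface
        · have : ρ ∈ bd S' γ := ⟨hρS', hρface⟩
          rw [hcp.2.2.2] at this
          exact hρmem.2 (Or.inl this)
      · -- reduction pair: right disjunct
        right
        intro t ht₀ htface htmem
        have htS' : t ∈ S' := hsub htmem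
        rcases hγmem with rfl | rfl
        · have : t ∈ cbd S' γ := ⟨htS', htface⟩
          rw [hrp.2.2.2] at this
          exact htmem.2 (Or.inr this)
        · exact red_top_no_coface hS hinv hrp htS' htface
    | inr s =>
      have hγs : γ = s := by
        by_contra hne
        exact hγ ⟨hγS', by simp [hne]⟩
      subst hγs
      rcases hvalid with hfr | htp
      · left
        intro ρ hρ₀ hρface hρmem
        have : ρ ∈ bd S' γ := ⟨hsub hρmem, hρface⟩
        rw [hfr.2] at this
        exact this
      · right
        intro t ht₀ htface htmem
        have : t ∈ cbd S' γ := ⟨hsub htmem, htface⟩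
        rw [htp.2] at this
        exact this
  · -- removed earlier: use old invariant, conclusions are monotone
    exact (hinv.2 γ hγ₀ hγS').imp
      (fun h ρ hρ₀ hf hm => h ρ hρ₀ hf (hsub hm))
      (fun h t ht₀ hf hm => h t ht₀ hf (hsub hm))

lemma remInv_remaining {S₀ : Set (Finset α)} (hS : IsComplex S₀) :
    ∀ (L : List (Op α)) (S' : Set (Finset α)), RemInv S₀ S' → IsInterSeq S' L →
      RemInv S₀ (remaining S' L)
  | [], _, hinv, _ => hinv
  | o :: L, S', hinv, hseq =>
      remInv_remaining hS L (removeOp S' o) (remInv_step hS hinv o hseq.1) hseq.2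

lemma isInterSeq_take {S' : Set (Finset α)} {L : List (Op α)} (h : IsInterSeq S' L) :
    ∀ n, IsInterSeq S' (L.take n) := by
  induction L generalizing S' with
  | nil => intro n; simp [IsInterSeq]
  | cons o L ih =>
    intro n
    cases n with
    | zero => trivial
    | succ n => exact ⟨h.1, ih h.2 n⟩

/-- Remark 2, first part: in an interleaved-based algorithm, removing a coreduction
pair or a free simplex cannot make a reduction pair feasible. -/
theorem coreduction_removal_no_new_reduction {α : Type*} [DecidableEq α]
    (S : Set (Finset α)) (hS : IsComplex S) (hfin : S.Finite)
    (L : List (Op α)) (hL : IsInterSeq S L)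
    (i : ℕ) (o : Op α) (hi : L[i]? = some o)
    (hcase :
      (∃ σ' τ', o = Sum.inl (σ', τ') ∧ CoredPair (remaining S (L.take i)) σ' τ') ∨
      (∃ σ', o = Sum.inr σ' ∧ FreeSimplex (remaining S (L.take i)) σ'))
    (a b : Finset α) (hred : RedPair (remaining S (L.take (i + 1))) a b) :
    RedPair (remaining S (L.take i)) a b := by
  classical
  set S' := remaining S (L.take i) with hS'def
  have hinv : RemInv S S' := remInv_remaining hS (L.take i) S (remInv_self S) (isInterSeq_take hL i)
  have htake : L.take (i + 1) = L.take i ++ [o] := by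
    rw [List.take_succ, hi]; rfl
  have hrem : remaining S (L.take (i + 1)) = removeOp S' o := by
    rw [htake]
    simp only [remaining, List.foldl_append]
    rfl
  rw [hrem] at hred
  rcases hcase with ⟨σ', τ', rfl, hcp⟩ | ⟨σ', rfl, hfs⟩
  · obtain ⟨ha, hb, hab, hcbd⟩ := hred
    have haS' : a ∈ S' := ha.1
    have hbS' : b ∈ S' := hb.1
    refine ⟨haS', hbS', hab, ?_⟩
    ext t
    simp only [cbd, Set.mem_setOf_eq, Set.mem_singleton_iff]
    constructor
    · rintro ⟨htS, hft⟩
      by_cases h1 : t = σ'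
      · exact absurd (cored_bottom_no_face hS hinv hcp haS' (h1 ▸ hft)) not_false
      by_cases h2 : t = τ'
      · exfalso
        have hmem : a ∈ bd S' τ' := ⟨haS', h2 ▸ hft⟩
        rw [hcp.2.2.2] at hmem
        exact ha.2 (Or.inl hmem)
      · have : t ∈ cbd (removeOp S' (Sum.inl (σ', τ'))) a := ⟨⟨htS, by simp [h1, h2]⟩, hft⟩
        rw [hcbd] at this
        exact this
    · rintro rfl
      exact ⟨hbS', hab⟩
  · obtain ⟨ha, hb, hab, hcbd⟩ := hred
    have haS' : a ∈ S' := ha.1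
    have hbS' : b ∈ S' := hb.1
    refine ⟨haS', hbS', hab, ?_⟩
    ext t
    simp only [cbd, Set.mem_setOf_eq, Set.mem_singleton_iff]
    constructor
    · rintro ⟨htS, hft⟩
      by_cases h1 : t = σ'
      · subst h1
        have : a ∈ bd S' t := ⟨haS', hft⟩
        rw [hfs.2] at this
        exact absurd this (Set.notMem_empty a)
      · have : t ∈ cbd (removeOp S' (Sum.inr σ')) a := ⟨⟨htS, by simp [h1]⟩, hft⟩
        rw [hcbd] at this
        exact this
    · rintro rfl
      exact ⟨hbS', hab⟩
end

section
/- Let Σ be a finite simplicial complex and let L be an exhausting valid interleaved removal sequence on Σ. Then there exists an exhausting reduction-based removal sequence on Σ (using only reduction pairs and top simplices) that removes exactly the same set of pairs and exactly the same set of single (critical) simplices as L; in particular it produces the same Forman gradient. (Proposition 3, reduction version.) -/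
open Finset

variable {α : Type*}

section AuxProp3
variable {α : Type*} [DecidableEq α]

/-- The finset of simplices removed by an operation. -/
def opFinset : Op α → Finset (Finset α)
  | Sum.inl (σ, τ) => {σ, τ}
  | Sum.inr σ => {σ}

lemma removeOp_eq (S : Set (Finset α)) (o : Op α) :
    removeOp S o = S \ ↑(opFinset o) := by
  cases o with
  | inl p =>
    obtain ⟨σ, τ⟩ := p
    simp [removeOp, opFinset]
  | inr σ => simp [removeOp, opFinset]

lemma removeOp_subset (S : Set (Finset α)) (o : Op α) : removeOp S o ⊆ S := by
  rw [removeOp_eq]; exact Set.diff_subset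

lemma opFinset_nonempty (o : Op α) : (opFinset o).Nonempty := by
  cases o with
  | inl p => obtain ⟨σ, τ⟩ := p; simp [opFinset]
  | inr σ => simp [opFinset]

/-- Every op of a valid interleaved sequence consists of simplices of `S`,
and pairs are immediate-face pairs. -/
lemma interSeq_op_mem (L : List (Op α)) : ∀ S : Set (Finset α), IsInterSeq S L →
    ∀ o ∈ L, (↑(opFinset o) : Set (Finset α)) ⊆ S ∧
      ∀ p : Finset α × Finset α, o = Sum.inl p → ImmFace p.1 p.2 := by
  induction L with
  | nil => intro S _ o ho; exact absurd ho List.not_mem_nil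
  | cons a L ih =>
    intro S hS o ho
    obtain ⟨h1, h2⟩ := hS
    rcases List.mem_cons.mp ho with rfl | ho'
    · constructor
      · cases o with
        | inl p =>
          obtain ⟨σ, τ⟩ := p
          intro x hx
          simp only [opFinset, Finset.coe_insert, Finset.coe_singleton,
            Set.mem_insert_iff, Set.mem_singleton_iff] at hx
          rcases h1 with h | h <;> rcases hx with rfl | rfl
          · exact h.1
          · exact h.2.1
          · exact h.1
          · exact h.2.1
        | inr σ =>
          intro x hx
          simp only [opFinset, Finset.coe_singleton, Set.mem_singleton_iff] at hx
          subst hx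
          rcases h1 with h | h
          · exact h.1
          · exact h.1
      · intro p hp
        subst hp
        obtain ⟨σ, τ⟩ := p
        rcases h1 with h | h
        · exact h.2.2.1
        · exact h.2.2.1
    · obtain ⟨hsub, himm⟩ := ih (removeOp S a) h2 o ho'
      exact ⟨hsub.trans (removeOp_subset S a), himm⟩

/-- In a valid interleaved sequence, no simplex belongs to two different ops. -/
lemma interSeq_unique (L : List (Op α)) : ∀ S : Set (Finset α), IsInterSeq S L →
    ∀ o ∈ L, ∀ o' ∈ L, ∀ x : Finset α, x ∈ opFinset o → x ∈ opFinset o' → o = o' := by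
  induction L with
  | nil => intro S _ o ho; exact absurd ho List.not_mem_nil
  | cons a L ih =>
    intro S hS o ho o' ho' x hx hx'
    obtain ⟨h1, h2⟩ := hS
    rcases List.mem_cons.mp ho with rfl | hoL
    · rcases List.mem_cons.mp ho' with rfl | ho'L
      · rfl
      · exfalso
        have hmem : x ∈ removeOp S o :=
          (interSeq_op_mem L (removeOp S o) h2 o' ho'L).1 (Finset.mem_coe.mpr hx')
        rw [removeOp_eq] at hmem
        exact hmem.2 (Finset.mem_coe.mpr hx)
    · rcases List.mem_cons.mp ho' with rfl | ho'L
      · exfalso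
        have hmem : x ∈ removeOp S o' :=
          (interSeq_op_mem L (removeOp S o') h2 o hoL).1 (Finset.mem_coe.mpr hx)
        rw [removeOp_eq] at hmem
        exact hmem.2 (Finset.mem_coe.mpr hx')
      · exact ih (removeOp S a) h2 o hoL o' ho'L x hx hx'

lemma exists_op_of_removed (L : List (Op α)) : ∀ S : Set (Finset α), ∀ x ∈ S,
    x ∉ remaining S L → ∃ o ∈ L, x ∈ opFinset o := by
  induction L with
  | nil => intro S x hx hr; exact absurd hx hr
  | cons a L ih =>
    intro S x hx hr
    by_cases hxa : x ∈ opFinset a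
    · exact ⟨a, List.mem_cons_self, hxa⟩
    · have hx' : x ∈ removeOp S a := by
        rw [removeOp_eq]; exact ⟨hx, fun h => hxa (Finset.mem_coe.mp h)⟩
      obtain ⟨o, ho, hxo⟩ := ih (removeOp S a) x hx' hr
      exact ⟨o, List.mem_cons_of_mem a ho, hxo⟩

/-- Key acyclicity lemma: there is no nonempty "cycle" of pairs of a valid
interleaved sequence in which every pair has both an outgoing and an incoming
neighbour. -/
lemma noCycle (L : List (Op α)) : ∀ S : Set (Finset α), IsInterSeq S L →
    ∀ C : Set (Finset α × Finset α),
    (∀ p ∈ C, Sum.inl p ∈ L) →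
    (∀ p ∈ C, ∃ q ∈ C, q ≠ p ∧ ImmFace p.1 q.2) →
    (∀ p ∈ C, ∃ r ∈ C, r ≠ p ∧ ImmFace r.1 p.2) →
    C = ∅ := by
  induction L with
  | nil =>
    intro S _ C hmem _ _
    ext p
    simp only [Set.mem_empty_iff_false, iff_false]
    intro hp
    exact absurd (hmem p hp) List.not_mem_nil
  | cons a L ih =>
    intro S hS C hmem hout hin
    obtain ⟨h1, h2⟩ := hS
    by_cases hhit : ∃ p0 ∈ C, Sum.inl p0 = a
    · exfalso
      obtain ⟨p0, hp0C, hp0a⟩ := hhit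
      subst hp0a
      obtain ⟨σ0, τ0⟩ := p0
      -- memberships of the other pairs' simplices after removing p0
      have haux : ∀ q ∈ C, q ≠ (σ0, τ0) →
          (↑(opFinset (Sum.inl q)) : Set (Finset α)) ⊆ removeOp S (Sum.inl (σ0, τ0)) := by
        intro q hqC hqne
        have hqL : Sum.inl q ∈ Sum.inl (σ0, τ0) :: L := hmem q hqC
        rcases List.mem_cons.mp hqL with heq | hqL'
        · exact absurd (by injection heq) hqne
        · exact (interSeq_op_mem L _ h2 _ hqL').1
      rcases h1 with h | h
      · -- coreduction pair: use the incoming neighbour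
        obtain ⟨r, hrC, hrne, hrImm⟩ := hin (σ0, τ0) hp0C
        have hr1 : r.1 ∈ removeOp S (Sum.inl (σ0, τ0)) := by
          apply haux r hrC hrne
          obtain ⟨rσ, rτ⟩ := r
          simp [opFinset]
        rw [removeOp_eq] at hr1
        have : r.1 ∈ bd S τ0 := ⟨hr1.1, hrImm⟩
        rw [h.2.2.2] at this
        apply hr1.2
        simp only [opFinset, Finset.coe_insert, Finset.coe_singleton,
          Set.mem_insert_iff, Set.mem_singleton_iff]
        exact Or.inl this
      · -- reduction pair: use the outgoing neighbour
        obtain ⟨q, hqC, hqne, hqImm⟩ := hout (σ0, τ0) hp0C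
        have hq2 : q.2 ∈ removeOp S (Sum.inl (σ0, τ0)) := by
          apply haux q hqC hqne
          obtain ⟨qσ, qτ⟩ := q
          simp [opFinset]
        rw [removeOp_eq] at hq2
        have : q.2 ∈ cbd S σ0 := ⟨hq2.1, hqImm⟩
        rw [h.2.2.2] at this
        apply hq2.2
        simp only [opFinset, Finset.coe_insert, Finset.coe_singleton,
          Set.mem_insert_iff, Set.mem_singleton_iff]
        exact Or.inr this
    · apply ih (removeOp S a) h2 C _ hout hin
      intro p hp
      rcases List.mem_cons.mp (hmem p hp) with heq | hL'
      · exact absurd ⟨p, hp, heq⟩ hhit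
      · exact hL'

/-- An op that is valid as a step of a reduction-based sequence. -/
def ValidRedOp (S : Set (Finset α)) : Op α → Prop
  | Sum.inl (σ, τ) => RedPair S σ τ
  | Sum.inr σ => TopSimplex S σ

omit [DecidableEq α] in
lemma isRedSeq_cons {S : Set (Finset α)} {o : Op α} {M : List (Op α)}
    (h1 : ValidRedOp S o) (h2 : IsRedSeq (removeOp S o) M) : IsRedSeq S (o :: M) := by
  cases o with
  | inl p => obtain ⟨σ, τ⟩ := p; exact ⟨h1, h2⟩
  | inr σ => exact ⟨h1, h2⟩


/-- The heart of the proof: among the simplices of top dimension of the union of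
the remaining ops, either some critical one is top, or some pair is a reduction
pair; otherwise we could build a cycle, contradicting `noCycle`. -/
lemma exists_validRedOp (L : List (Op α)) (S : Set (Finset α)) (hL : IsInterSeq S L)
    (O : Finset (Op α)) (hOL : ∀ o ∈ O, o ∈ L) (hne : O.Nonempty) :
    ∃ o ∈ O, ValidRedOp (↑(O.biUnion opFinset) : Set (Finset α)) o := by
  classical
  set S'' : Set (Finset α) := ↑(O.biUnion opFinset) with hS''def
  have hmemS'' : ∀ x : Finset α, x ∈ S'' ↔ ∃ o ∈ O, x ∈ opFinset o := by
    intro x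
    simp [hS''def, Finset.mem_coe, Finset.mem_biUnion]
  obtain ⟨o0, ho0⟩ := hne
  have hSne : (O.biUnion opFinset).Nonempty := by
    obtain ⟨x, hx⟩ := opFinset_nonempty o0
    exact ⟨x, Finset.mem_biUnion.mpr ⟨o0, ho0, hx⟩⟩
  obtain ⟨ρ0, hρ0, hmax⟩ := Finset.exists_max_image (O.biUnion opFinset) Finset.card hSne
  by_contra hno
  push_neg at hno
  set D : Finset (Finset α) := (O.biUnion opFinset).filter (fun ρ => ρ.card = ρ0.card)
    with hDdef
  have hρ0D : ρ0 ∈ D := Finset.mem_filter.mpr ⟨hρ0, rfl⟩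
  have h1 : ∀ x : {ρ // ρ ∈ D}, ∃ (p : Finset α × Finset α) (y : {ρ // ρ ∈ D}),
      Sum.inl p ∈ O ∧ p.2 = x.val ∧ y.val ≠ x.val ∧ ImmFace p.1 y.val := by
    rintro ⟨ρ, hρ⟩
    obtain ⟨hρS, hρd⟩ := Finset.mem_filter.mp hρ
    obtain ⟨o, hoO, hρo⟩ := Finset.mem_biUnion.mp hρS
    have hρS'' : ρ ∈ S'' := (hmemS'' ρ).mpr ⟨o, hoO, hρo⟩
    cases o with
    | inr σ =>
      exfalso
      have hσρ : σ = ρ := by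
        have : ρ = σ := by simpa [opFinset] using hρo
        exact this.symm
      subst hσρ
      apply hno _ hoO
      show TopSimplex S'' σ
      refine ⟨hρS'', ?_⟩
      ext τ
      simp only [cbd, Set.mem_setOf_eq, Set.mem_empty_iff_false, iff_false, not_and]
      intro hτS hImm
      have hτb : τ ∈ O.biUnion opFinset := by
        rw [hS''def] at hτS
        exact Finset.mem_coe.mp hτS
      have h2 := hmax τ hτb
      have h3 := hImm.2
      omega
    | inl p =>
      obtain ⟨σ, τ⟩ := p
      have hImmp : ImmFace σ τ :=
        (interSeq_op_mem L S hL _ (hOL _ hoO)).2 (σ, τ) rfl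
      have hσS'' : σ ∈ S'' := (hmemS'' σ).mpr ⟨_, hoO, by simp [opFinset]⟩
      have hτS'' : τ ∈ S'' := (hmemS'' τ).mpr ⟨_, hoO, by simp [opFinset]⟩
      have hcase : ρ = σ ∨ ρ = τ := by simpa [opFinset] using hρo
      have hρτ : ρ = τ := by
        rcases hcase with rfl | rfl
        · exfalso
          have hτb : τ ∈ O.biUnion opFinset := by
            rw [hS''def] at hτS''
            exact Finset.mem_coe.mp hτS''
          have h2 := hmax τ hτb
          have h3 := hImmp.2
          omega
        · rfl
      subst hρτ
      have hnred : ¬ RedPair S'' σ ρ := by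
        intro h
        exact hno _ hoO h
      have hτcbd : ρ ∈ cbd S'' σ := ⟨hτS'', hImmp⟩
      have hne2 : cbd S'' σ ≠ {ρ} := fun h => hnred ⟨hσS'', hτS'', hImmp, h⟩
      have hex2 : ∃ ρ', ρ' ∈ cbd S'' σ ∧ ρ' ≠ ρ := by
        by_contra hc
        push_neg at hc
        apply hne2
        apply Set.Subset.antisymm
        · intro z hz
          exact hc z hz
        · intro z hz
          rw [Set.mem_singleton_iff] at hz
          subst hz
          exact hτcbd
      obtain ⟨ρ', hρ'cbd, hρ'ne⟩ := hex2
      have hρ'D : ρ' ∈ D := by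
        have hρ'b : ρ' ∈ O.biUnion opFinset := by
          have := hρ'cbd.1
          rw [hS''def] at this
          exact Finset.mem_coe.mp this
        refine Finset.mem_filter.mpr ⟨hρ'b, ?_⟩
        have h2 := hρ'cbd.2.2
        have h3 := hImmp.2
        omega
      exact ⟨(σ, ρ), ⟨ρ', hρ'D⟩, hoO, rfl, hρ'ne, hρ'cbd.2⟩
  choose P g hPO hP2 hgne hgImm using h1
  have hper : ∃ x : {ρ // ρ ∈ D}, ∃ n, 0 < n ∧ g^[n] x = x := by
    obtain ⟨i, j, hij, heq⟩ :=
      Finite.exists_ne_map_eq_of_infinite (fun n : ℕ => g^[n] ⟨ρ0, hρ0D⟩)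
    rcases lt_or_gt_of_ne hij with h | h
    · refine ⟨g^[i] ⟨ρ0, hρ0D⟩, j - i, by omega, ?_⟩
      rw [← Function.iterate_add_apply]
      have hji : j - i + i = j := by omega
      rw [hji]
      exact heq.symm
    · refine ⟨g^[j] ⟨ρ0, hρ0D⟩, i - j, by omega, ?_⟩
      rw [← Function.iterate_add_apply]
      have hij' : i - j + j = i := by omega
      rw [hij']
      exact heq
  obtain ⟨x0, hx0⟩ := hper
  set C : Set (Finset α × Finset α) :=
    {p | ∃ x : {ρ // ρ ∈ D}, (∃ n, 0 < n ∧ g^[n] x = x) ∧ P x = p} with hCdef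
  have hCempty : C = ∅ := by
    apply noCycle L S hL C
    · rintro p ⟨x, -, rfl⟩
      exact hOL _ (hPO x)
    · rintro p ⟨x, hxper, rfl⟩
      refine ⟨P (g x), ⟨g x, ?_, rfl⟩, ?_, ?_⟩
      · obtain ⟨n, hn, hgn⟩ := hxper
        refine ⟨n, hn, ?_⟩
        have hcomm : g^[n] (g x) = g (g^[n] x) := by
          rw [← Function.iterate_succ_apply, Function.iterate_succ_apply']
        rw [hcomm, hgn]
      · intro hEq
        apply hgne x
        have hval : (P (g x)).2 = (P x).2 := by rw [hEq]
        rw [hP2, hP2] at hval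
        exact hval
      · rw [hP2]
        exact hgImm x
    · rintro p ⟨x, hxper, rfl⟩
      obtain ⟨n, hn, hgn⟩ := hxper
      set y := g^[n - 1] x with hydef
      have hgy : g y = x := by
        have h := Function.iterate_succ_apply' g (n - 1) x
        have hn1 : n - 1 + 1 = n := by omega
        rw [Nat.succ_eq_add_one, hn1] at h
        rw [hydef, ← h]
        exact hgn
      have hyper : g^[n] y = y := by
        rw [hydef, ← Function.iterate_add_apply, add_comm,
          Function.iterate_add_apply, hgn]
      refine ⟨P y, ⟨y, ⟨n, hn, hyper⟩, rfl⟩, ?_, ?_⟩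
      · intro hEq
        have hval : (P y).2 = (P x).2 := by rw [hEq]
        rw [hP2, hP2] at hval
        have hyx : y = x := Subtype.ext hval
        apply hgne x
        rw [hyx] at hgy
        rw [hgy]
      · rw [hP2]
        have himm := hgImm y
        rw [hgy] at himm
        exact himm
  have hmemC : P x0 ∈ C := ⟨x0, hx0, rfl⟩
  rw [hCempty] at hmemC
  exact hmemC

/-- Greedy construction of the reduction-based sequence. -/
lemma greedy (L : List (Op α)) (S : Set (Finset α)) (hL : IsInterSeq S L) :
    ∀ (n : ℕ) (O : Finset (Op α)), O.card ≤ n → (∀ o ∈ O, o ∈ L) →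
    ∃ M : List (Op α), IsRedSeq (↑(O.biUnion opFinset) : Set (Finset α)) M ∧
      remaining (↑(O.biUnion opFinset) : Set (Finset α)) M = ∅ ∧
      ∀ o : Op α, o ∈ M ↔ o ∈ O := by
  intro n
  induction n with
  | zero =>
    intro O hcard hOL
    have hO : O = ∅ := Finset.card_eq_zero.mp (Nat.le_zero.mp hcard)
    subst hO
    refine ⟨[], trivial, ?_, by simp⟩
    show (↑((∅ : Finset (Op α)).biUnion opFinset) : Set (Finset α)) = ∅
    simp
  | succ n ih =>
    intro O hcard hOL
    rcases Finset.eq_empty_or_nonempty O with rfl | hne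
    · refine ⟨[], trivial, ?_, by simp⟩
      show (↑((∅ : Finset (Op α)).biUnion opFinset) : Set (Finset α)) = ∅
      simp
    · obtain ⟨o, hoO, hvalid⟩ := exists_validRedOp L S hL O hOL hne
      have hrem : removeOp (↑(O.biUnion opFinset) : Set (Finset α)) o
          = ↑((O.erase o).biUnion opFinset) := by
        rw [removeOp_eq]
        ext x
        constructor
        · rintro ⟨hx, hxo⟩
          obtain ⟨o', ho', hxo'⟩ := Finset.mem_biUnion.mp (Finset.mem_coe.mp hx)
          refine Finset.mem_coe.mpr (Finset.mem_biUnion.mpr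
            ⟨o', Finset.mem_erase.mpr ⟨?_, ho'⟩, hxo'⟩)
          rintro rfl
          exact hxo (Finset.mem_coe.mpr hxo')
        · intro hx
          obtain ⟨o', ho', hxo'⟩ := Finset.mem_biUnion.mp (Finset.mem_coe.mp hx)
          obtain ⟨hne', ho'O⟩ := Finset.mem_erase.mp ho'
          refine ⟨Finset.mem_coe.mpr (Finset.mem_biUnion.mpr ⟨o', ho'O, hxo'⟩), ?_⟩
          intro hxo
          exact hne' (interSeq_unique L S hL o' (hOL o' ho'O) o (hOL o hoO) x hxo'
            (Finset.mem_coe.mp hxo))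
      obtain ⟨M, hM1, hM2, hM3⟩ := ih (O.erase o)
        (by have := Finset.card_erase_of_mem hoO; omega)
        (fun o' ho' => hOL o' (Finset.mem_of_mem_erase ho'))
      refine ⟨o :: M, isRedSeq_cons hvalid (by rw [hrem]; exact hM1), ?_, ?_⟩
      · show remaining (removeOp (↑(O.biUnion opFinset) : Set (Finset α)) o) M = ∅
        rw [hrem]
        exact hM2
      · intro o'
        simp only [List.mem_cons, hM3, Finset.mem_erase]
        constructor
        · rintro (rfl | ⟨-, h⟩)
          · exact hoO
          · exact h
        · intro h
          by_cases h' : o' = o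
          · exact Or.inl h'
          · exact Or.inr ⟨h', h⟩

end AuxProp3
/-- Proposition 3, reduction version: any exhausting valid interleaved removal
sequence can be replaced by an exhausting reduction-based removal sequence that
removes exactly the same pairs and the same single (critical) simplices. -/
theorem interleaved_to_reduction_seq {α : Type*} [DecidableEq α]
    (S : Set (Finset α)) (hS : IsComplex S) (hfin : S.Finite)
    (L : List (Op α)) (hL : IsInterSeq S L) (hex : remaining S L = ∅) :
    ∃ L' : List (Op α), IsRedSeq S L' ∧ remaining S L' = ∅ ∧
      (∀ p : Finset α × Finset α, Sum.inl p ∈ L' ↔ Sum.inl p ∈ L) ∧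
      (∀ σ : Finset α, Sum.inr σ ∈ L' ↔ Sum.inr σ ∈ L) := by
  classical
  have hSeq : S = ↑(L.toFinset.biUnion opFinset) := by
    ext x
    constructor
    · intro hx
      obtain ⟨o, hoL, hxo⟩ := exists_op_of_removed L S x hx
        (by rw [hex]; exact Set.notMem_empty x)
      exact Finset.mem_coe.mpr
        (Finset.mem_biUnion.mpr ⟨o, List.mem_toFinset.mpr hoL, hxo⟩)
    · intro hx
      obtain ⟨o, hoL, hxo⟩ := Finset.mem_biUnion.mp (Finset.mem_coe.mp hx)
      exact (interSeq_op_mem L S hL o (List.mem_toFinset.mp hoL)).1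
        (Finset.mem_coe.mpr hxo)
  obtain ⟨M, hM1, hM2, hM3⟩ := greedy L S hL L.toFinset.card L.toFinset le_rfl
    (fun o ho => List.mem_toFinset.mp ho)
  rw [← hSeq] at hM1 hM2
  exact ⟨M, hM1, hM2,
    fun p => (hM3 (Sum.inl p)).trans List.mem_toFinset,
    fun σ => (hM3 (Sum.inr σ)).trans List.mem_toFinset⟩
end
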